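/- Let A be a finite skew left brace with nilpotent additive group and p a prime dividing |A|. The following are equivalent: (1) there exists n with L_n(A, A_p) = 0, where L_0(A, A_p) = A_p and L_{k+1}(A, A_p) = A*L_k(A, A_p); (2) A_{p'} * A_p = 0; (3) the multiplicative group (A,∘) is p-nilpotent (has a normal Hall p'-subgroup). -/

import Mathlib

/-- A skew left brace: `(A,+)` and `(A,*)` are groups (the multiplicative
operation `*` plays the role of the circle operation `∘`) satisfying
`a ∘ (b + c) = a ∘ b - a + a ∘ c`. -/
class SkewBrace (A : Type*) extends AddGroup A, Group A where
  compat : ∀ a b c : A, a * (b + c) = a * b - a + a * c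

/-- The lambda map of a skew brace: `λ_a(b) = -a + a ∘ b`. -/
def lam {A : Type*} [SkewBrace A] (a b : A) : A := -a + a * b

/-- The star operation of a skew brace: `a * b := λ_a(b) - b`. -/
def starB {A : Type*} [SkewBrace A] (a b : A) : A := lam a b - b

/-- `X * Y`: the additive subgroup generated by `{x * y : x ∈ X, y ∈ Y}`. -/
def starSet {A : Type*} [SkewBrace A] (X Y : Set A) : AddSubgroup A :=
  AddSubgroup.closure {z : A | ∃ x ∈ X, ∃ y ∈ Y, z = starB x y}

/-- The series `L_0(A, S) = S`, `L_{k+1}(A, S) = A * L_k(A, S)`. -/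
def Lseq {A : Type*} [SkewBrace A] (S : AddSubgroup A) : ℕ → AddSubgroup A
  | 0 => S
  | k + 1 => starSet (Set.univ : Set A) ↑(Lseq S k)

namespace SB
variable {A : Type*} [SkewBrace A]

lemma circ_zero (a : A) : a * 0 = a := by
  have h := SkewBrace.compat a 0 0
  rw [add_zero] at h
  have h2 : (0:A) + a * 0 = (a * 0 - a) + a * 0 := by rw [zero_add]; exact h
  have h3 := add_right_cancel h2
  exact sub_eq_zero.mp h3.symm

lemma one_eq_zero : (1 : A) = 0 := by
  have := circ_zero (1 : A)
  rw [one_mul] at this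
  exact this.symm

lemma circ_eq (a b : A) : a * b = a + lam a b := by
  simp [lam]

lemma lam_add (a b c : A) : lam a (b + c) = lam a b + lam a c := by
  simp [lam, SkewBrace.compat a b c, sub_eq_add_neg, add_assoc]

lemma lam_zero (a : A) : lam a 0 = 0 := by
  simp [lam, circ_zero]

/-- lam as an additive monoid hom. -/
def lamHom (a : A) : A →+ A := AddMonoidHom.mk' (lam a) (lam_add a)

lemma lam_lam (a b c : A) : lam a (lam b c) = lam (a * b) c := by
  have hneg : a * (-b) = a - a * b + a := by
    have h := SkewBrace.compat a b (-b)
    rw [add_neg_cancel, circ_zero] at h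
    have h2 : a * b - a + a * (-b) = a := h.symm
    have h3 : a * (-b) = -(a * b - a) + a := eq_neg_add_of_add_eq h2
    rw [h3]
    simp [sub_eq_add_neg, add_assoc]
  calc lam a (lam b c) = -a + a * (-b + b * c) := rfl
    _ = -a + (a * (-b) - a + a * (b * c)) := by rw [SkewBrace.compat]
    _ = -a + ((a - a * b + a) - a + a * (b * c)) := by rw [hneg]
    _ = -(a * b) + a * b * c := by
        rw [mul_assoc]
        simp [sub_eq_add_neg, add_assoc]
    _ = lam (a * b) c := rfl

lemma lam_one (b : A) : lam 1 b = b := by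
  simp [lam, one_eq_zero]

lemma lam_lam_inv (a b : A) : lam a (lam a⁻¹ b) = b := by
  rw [lam_lam, mul_inv_cancel, lam_one]

lemma lam_inv_lam (a b : A) : lam a⁻¹ (lam a b) = b := by
  rw [lam_lam, inv_mul_cancel, lam_one]

lemma lam_injective (a : A) : Function.Injective (lam a) := by
  intro x y h
  have := congrArg (lam a⁻¹) h
  rwa [lam_inv_lam, lam_inv_lam] at this

lemma lam_inv_self (a : A) : lam a a⁻¹ = -a := by
  have : a * a⁻¹ = a + lam a a⁻¹ := circ_eq a a⁻¹
  rw [mul_inv_cancel, one_eq_zero] at this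
  exact eq_neg_of_add_eq_zero_right this.symm

/-- lam as a monoid hom into additive automorphisms. -/
def lamAut : A →* Equiv.Perm A where
  toFun a := { toFun := lam a, invFun := lam a⁻¹, left_inv := lam_inv_lam a,
               right_inv := lam_lam_inv a }
  map_one' := by ext b; exact lam_one b
  map_mul' a b := by ext c; exact (lam_lam a b c).symm

end SB

section Torsion
variable {A : Type*} [SkewBrace A]

lemma mem_Sp_iff {p : ℕ} {Sp : AddSubgroup A}
    (hSp : (Sp : Set A) = {a : A | ∃ k : ℕ, p ^ k • a = 0}) {a : A} :
    a ∈ Sp ↔ ∃ k : ℕ, p ^ k • a = 0 := by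
  rw [← SetLike.mem_coe, hSp]; rfl

lemma mem_Sp'_iff {p : ℕ} {Sp' : AddSubgroup A}
    (hSp' : (Sp' : Set A) = {a : A | ¬ p ∣ addOrderOf a}) {a : A} :
    a ∈ Sp' ↔ ¬ p ∣ addOrderOf a := by
  rw [← SetLike.mem_coe, hSp']; rfl

lemma lam_mem_Sp {p : ℕ} {Sp : AddSubgroup A}
    (hSp : (Sp : Set A) = {a : A | ∃ k : ℕ, p ^ k • a = 0}) (x : A) {a : A}
    (ha : a ∈ Sp) : lam x a ∈ Sp := by
  rw [mem_Sp_iff hSp] at ha ⊢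
  obtain ⟨k, hk⟩ := ha
  refine ⟨k, ?_⟩
  have := (SB.lamHom x).map_nsmul (p ^ k) a
  rw [hk] at this
  have h0 : SB.lamHom x 0 = 0 := (SB.lamHom x).map_zero
  rw [h0] at this
  exact this.symm

lemma addOrderOf_lam (x a : A) : addOrderOf (lam x a) = addOrderOf a :=
  addOrderOf_injective (SB.lamHom x) (SB.lam_injective x) a

lemma lam_mem_Sp' {p : ℕ} {Sp' : AddSubgroup A}
    (hSp' : (Sp' : Set A) = {a : A | ¬ p ∣ addOrderOf a}) (x : A) {a : A}
    (ha : a ∈ Sp') : lam x a ∈ Sp' := by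
  rw [mem_Sp'_iff hSp'] at ha ⊢
  rwa [addOrderOf_lam]

lemma mem_Sp_inter {p : ℕ} (hp : p.Prime) {Sp Sp' : AddSubgroup A}
    (hSp : (Sp : Set A) = {a : A | ∃ k : ℕ, p ^ k • a = 0})
    (hSp' : (Sp' : Set A) = {a : A | ¬ p ∣ addOrderOf a}) {a : A}
    (ha : a ∈ Sp) (ha' : a ∈ Sp') : a = 0 := by
  rw [mem_Sp_iff hSp] at ha
  rw [mem_Sp'_iff hSp'] at ha'
  obtain ⟨k, hk⟩ := ha
  have hdvd : addOrderOf a ∣ p ^ k := addOrderOf_dvd_of_nsmul_eq_zero hk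
  have hcop : Nat.Coprime (p ^ k) (addOrderOf a) :=
    Nat.Coprime.pow_left k ((Nat.Prime.coprime_iff_not_dvd hp).mpr ha')
  have h1 : addOrderOf a ∣ Nat.gcd (p ^ k) (addOrderOf a) := Nat.dvd_gcd hdvd dvd_rfl
  rw [Nat.Coprime.gcd_eq_one hcop] at h1
  exact AddMonoid.addOrderOf_eq_one_iff.mp (Nat.dvd_one.mp h1)

/-- conjugation as an additive hom -/
def conjHom (x : A) : A →+ A :=
  AddMonoidHom.mk' (fun a => x + a + -x) (by
    intro a b
    simp [add_assoc])

lemma conjHom_injective (x : A) : Function.Injective (conjHom x) := by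
  intro a b h
  simpa [conjHom, AddMonoidHom.mk', add_assoc] using congrArg (fun z => -x + z + x) h

lemma addOrderOf_conj (x a : A) : addOrderOf (x + a + -x) = addOrderOf a :=
  addOrderOf_injective (conjHom x) (conjHom_injective x) a

lemma Sp_Sp'_comm {p : ℕ} (hp : p.Prime) {Sp Sp' : AddSubgroup A}
    (hSp : (Sp : Set A) = {a : A | ∃ k : ℕ, p ^ k • a = 0})
    (hSp' : (Sp' : Set A) = {a : A | ¬ p ∣ addOrderOf a}) {u v : A}
    (hu : u ∈ Sp) (hv : v ∈ Sp') : u + v = v + u := by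
  have hk : u + v + -u ∈ Sp' := by
    rw [mem_Sp'_iff hSp'] at hv ⊢
    rwa [addOrderOf_conj]
  have hj : v + u + -v ∈ Sp := by
    rw [mem_Sp_iff hSp] at hu ⊢
    obtain ⟨k, hku⟩ := hu
    refine ⟨k, ?_⟩
    rw [← addOrderOf_dvd_iff_nsmul_eq_zero] at hku ⊢
    rwa [addOrderOf_conj]
  have hc1 : u + v + -u + -v ∈ Sp' := by
    exact Sp'.add_mem hk (Sp'.neg_mem hv)
  have hc2 : u + v + -u + -v ∈ Sp := by
    have h := Sp.add_mem hu (Sp.neg_mem hj)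
    have he : u + -(v + u + -v) = u + v + -u + -v := by
      simp [add_assoc]
    rwa [he] at h
  have hc0 : u + v + -u + -v = 0 := mem_Sp_inter hp hSp hSp' hc2 hc1
  have := congrArg (fun z => z + v + u) hc0
  simpa [add_assoc] using this

end Torsion
section Decomp
variable {A : Type*} [SkewBrace A] [Finite A]

lemma zsmul_shuffle {A : Type*} [AddGroup A] (a : A) (r s : ℤ) :
    (r * s) • a = r • (s • a) := mul_zsmul a r s

lemma exists_decomp {p : ℕ} (hp : p.Prime) {Sp Sp' : AddSubgroup A}
    (hSp : (Sp : Set A) = {a : A | ∃ k : ℕ, p ^ k • a = 0})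
    (hSp' : (Sp' : Set A) = {a : A | ¬ p ∣ addOrderOf a}) (a : A) :
    ∃ u ∈ Sp, ∃ v ∈ Sp', a = u + v := by
  set n := addOrderOf a with hn
  have hn0 : n ≠ 0 := (addOrderOf_pos a).ne'
  set k := n.factorization p with hk
  set m := n / p ^ k with hm
  have hnm : p ^ k * m = n := Nat.ordProj_mul_ordCompl_eq_self n p
  have hpm : ¬ p ∣ m := Nat.not_dvd_ordCompl hp hn0
  have hcop : Nat.Coprime (p ^ k) m :=
    Nat.Coprime.pow_left k ((Nat.Prime.coprime_iff_not_dvd hp).mpr hpm)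
  obtain ⟨x, y, hxy⟩ := Nat.isCoprime_iff_coprime.mpr hcop
  have hna : (n : ℤ) • a = 0 := by
    rw [natCast_zsmul]; exact addOrderOf_nsmul_eq_zero a
  have hu : (y * (m : ℤ)) • a ∈ Sp := by
    rw [mem_Sp_iff hSp]
    refine ⟨k, ?_⟩
    calc (p ^ k : ℕ) • ((y * (m : ℤ)) • a)
        = ((p ^ k : ℕ) : ℤ) • ((y * (m : ℤ)) • a) := (natCast_zsmul _ _).symm
      _ = (((p ^ k : ℕ) : ℤ) * (y * (m : ℤ))) • a := (zsmul_shuffle a _ _).symm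
      _ = (y * (((p ^ k) * m : ℕ) : ℤ)) • a := by congr 1; push_cast; ring
      _ = y • (((n : ℕ) : ℤ) • a) := by rw [hnm, zsmul_shuffle]
      _ = 0 := by rw [hna, smul_zero]
  have hv : (x * ((p ^ k : ℕ) : ℤ)) • a ∈ Sp' := by
    rw [mem_Sp'_iff hSp']
    intro hdvd
    have hmv : (m : ℕ) • ((x * ((p ^ k : ℕ) : ℤ)) • a) = 0 := by
      calc (m : ℕ) • ((x * ((p ^ k : ℕ) : ℤ)) • a)
          = ((m : ℕ) : ℤ) • ((x * ((p ^ k : ℕ) : ℤ)) • a) := (natCast_zsmul _ _).symm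
        _ = (((m : ℕ) : ℤ) * (x * ((p ^ k : ℕ) : ℤ))) • a := (zsmul_shuffle a _ _).symm
        _ = (x * (((p ^ k) * m : ℕ) : ℤ)) • a := by congr 1; push_cast; ring
        _ = x • (((n : ℕ) : ℤ) • a) := by rw [hnm, zsmul_shuffle]
        _ = 0 := by rw [hna, smul_zero]
    have hom : addOrderOf ((x * ((p ^ k : ℕ) : ℤ)) • a) ∣ m :=
      addOrderOf_dvd_of_nsmul_eq_zero hmv
    exact hpm (dvd_trans hdvd hom)
  refine ⟨(y * (m : ℤ)) • a, hu, (x * ((p ^ k : ℕ) : ℤ)) • a, hv, ?_⟩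
  have hone : a = (x * ((p ^ k : ℕ) : ℤ) + y * (m : ℤ)) • a := by
    rw [show (x * ((p ^ k : ℕ) : ℤ) + y * (m : ℤ)) = 1 by push_cast at hxy ⊢; linarith,
      one_zsmul]
  have ha1 : a = (x * ((p ^ k : ℕ) : ℤ)) • a + (y * (m : ℤ)) • a := by
    conv_lhs => rw [hone, add_zsmul]
  exact ha1.trans (Sp_Sp'_comm hp hSp hSp' hu hv).symm

lemma decomp_unique {p : ℕ} (hp : p.Prime) {Sp Sp' : AddSubgroup A}
    (hSp : (Sp : Set A) = {a : A | ∃ k : ℕ, p ^ k • a = 0})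
    (hSp' : (Sp' : Set A) = {a : A | ¬ p ∣ addOrderOf a}) {u v u' v' : A}
    (hu : u ∈ Sp) (hv : v ∈ Sp') (hu' : u' ∈ Sp) (hv' : v' ∈ Sp')
    (h : u + v = u' + v') : u = u' ∧ v = v' := by
  have h1 : -u' + u = v' + -v := by
    have := congrArg (fun z => -u' + z + -v) h
    simpa [add_assoc] using this
  have h2 : -u' + u ∈ Sp := Sp.add_mem (Sp.neg_mem hu') hu
  have h3 : -u' + u ∈ Sp' := by rw [h1]; exact Sp'.add_mem hv' (Sp'.neg_mem hv)
  have h0 : -u' + u = 0 := mem_Sp_inter hp hSp hSp' h2 h3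
  constructor
  · have := congrArg (fun z => u' + z) h0
    simpa [add_assoc] using this
  · have h4 : v' + -v = 0 := by rw [← h1]; exact h0
    have := congrArg (fun z => z + v) h4
    simpa [add_assoc] using this.symm
end Decomp
section Circle
variable {A : Type*} [SkewBrace A] [Finite A]

/-- An additive subgroup that is `lam`-closed is a subgroup of the circle group. -/
def circleSubgroup (S : AddSubgroup A)
    (hlam : ∀ x a : A, a ∈ S → lam x a ∈ S) : Subgroup A where
  carrier := S
  one_mem' := by
    simp only [Set.mem_setOf_eq, SetLike.mem_coe]
    rw [SB.one_eq_zero]; exact S.zero_mem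
  mul_mem' := by
    intro a b ha hb
    simp only [Set.mem_setOf_eq, SetLike.mem_coe] at *
    rw [SB.circ_eq]
    exact S.add_mem ha (hlam a b hb)
  inv_mem' := by
    intro x hx
    simp only [Set.mem_setOf_eq, SetLike.mem_coe] at *
    have hpow : ∀ n : ℕ, x ^ (n + 1) ∈ S := by
      intro n
      induction n with
      | zero => simpa using hx
      | succ k ih =>
        have : x ^ (k + 1 + 1) = x * x ^ (k + 1) := by rw [← pow_succ']
        rw [this, SB.circ_eq]
        exact S.add_mem hx (hlam x _ ih)
    have ho : 0 < orderOf x := orderOf_pos x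
    rcases eq_or_ne (orderOf x) 1 with h1 | h2
    · have : x = 1 := orderOf_eq_one_iff.mp h1
      rw [this, inv_one, SB.one_eq_zero]; exact S.zero_mem
    · obtain ⟨j, hj⟩ : ∃ j, orderOf x - 1 = j + 1 := ⟨orderOf x - 2, by omega⟩
      have hxo : x * x ^ (j + 1) = 1 := by
        rw [← pow_succ', ← hj, Nat.sub_add_cancel (by omega)]
        exact pow_orderOf_eq_one x
      rw [inv_eq_of_mul_eq_one_right hxo]
      exact hpow j

lemma card_circleSubgroup (S : AddSubgroup A) (hlam : ∀ x a : A, a ∈ S → lam x a ∈ S) :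
    Nat.card ↥(circleSubgroup S hlam) = Nat.card ↥S :=
  Nat.card_congr ⟨fun x => ⟨x.1, x.2⟩, fun x => ⟨x.1, x.2⟩, fun _ => rfl, fun _ => rfl⟩

lemma card_Sp_mul_card_Sp' {p : ℕ} (hp : p.Prime) {Sp Sp' : AddSubgroup A}
    (hSp : (Sp : Set A) = {a : A | ∃ k : ℕ, p ^ k • a = 0})
    (hSp' : (Sp' : Set A) = {a : A | ¬ p ∣ addOrderOf a}) :
    Nat.card ↥Sp * Nat.card ↥Sp' = Nat.card A := by
  have hbij : Function.Bijective (fun w : ↥Sp × ↥Sp' => (w.1 : A) + (w.2 : A)) := by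
    constructor
    · rintro ⟨u, v⟩ ⟨u', v'⟩ h
      simp only at h
      obtain ⟨h1, h2⟩ := decomp_unique hp hSp hSp' u.2 v.2 u'.2 v'.2 h
      simp [Prod.ext_iff, Subtype.ext_iff, h1, h2]
    · intro a
      obtain ⟨u, hu, v, hv, hdec⟩ := exists_decomp hp hSp hSp' a
      exact ⟨(⟨u, hu⟩, ⟨v, hv⟩), hdec.symm⟩
  calc Nat.card ↥Sp * Nat.card ↥Sp' = Nat.card (↥Sp × ↥Sp') := (Nat.card_prod _ _).symm
    _ = Nat.card A := Nat.card_congr (Equiv.ofBijective _ hbij)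

lemma card_Sp_pow {p : ℕ} (hp : p.Prime) {Sp : AddSubgroup A}
    (hSp : (Sp : Set A) = {a : A | ∃ k : ℕ, p ^ k • a = 0}) :
    ∃ e : ℕ, Nat.card ↥Sp = p ^ e := by
  haveI : Fact p.Prime := ⟨hp⟩
  have hP : IsPGroup p (Multiplicative ↥Sp) := by
    intro g
    have hmem : ((Multiplicative.toAdd g : ↥Sp) : A) ∈ Sp := (Multiplicative.toAdd g).2
    rw [mem_Sp_iff hSp] at hmem
    obtain ⟨k, hk⟩ := hmem
    refine ⟨k, ?_⟩
    have : Multiplicative.toAdd (g ^ p ^ k) = 0 := by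
      rw [toAdd_pow]
      ext
      push_cast
      exact hk
    simpa using congrArg Multiplicative.ofAdd this
  obtain ⟨e, he⟩ := IsPGroup.iff_card.mp hP
  exact ⟨e, by rw [← he]; exact (Nat.card_congr Multiplicative.toAdd).symm⟩

lemma card_Sp'_not_dvd {p : ℕ} (hp : p.Prime) {Sp' : AddSubgroup A}
    (hSp' : (Sp' : Set A) = {a : A | ¬ p ∣ addOrderOf a}) :
    ¬ p ∣ Nat.card ↥Sp' := by
  haveI : Fact p.Prime := ⟨hp⟩
  intro hdvd
  have hdvd' : p ∣ Nat.card (Multiplicative ↥Sp') := by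
    rwa [Nat.card_congr Multiplicative.toAdd]
  obtain ⟨g, hg⟩ := exists_prime_orderOf_dvd_card' (G := Multiplicative ↥Sp') p hdvd'
  have h1 : addOrderOf (Multiplicative.toAdd g) = p := by
    rw [← orderOf_ofAdd_eq_addOrderOf]
    simpa using hg
  have h2 : addOrderOf ((Multiplicative.toAdd g : ↥Sp') : A) = p := by
    rw [AddSubgroup.addOrderOf_coe, h1]
  have hmem : ((Multiplicative.toAdd g : ↥Sp') : A) ∈ Sp' := (Multiplicative.toAdd g).2
  rw [mem_Sp'_iff hSp'] at hmem
  exact hmem (h2 ▸ dvd_rfl)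

lemma card_Sp_eq {p : ℕ} (hp : p.Prime) {Sp Sp' : AddSubgroup A}
    (hSp : (Sp : Set A) = {a : A | ∃ k : ℕ, p ^ k • a = 0})
    (hSp' : (Sp' : Set A) = {a : A | ¬ p ∣ addOrderOf a}) :
    Nat.card ↥Sp = p ^ ((Nat.card A).factorization p) := by
  obtain ⟨e, he⟩ := card_Sp_pow hp hSp
  have hmul := card_Sp_mul_card_Sp' hp hSp hSp'
  have hnd := card_Sp'_not_dvd hp hSp'
  have hpos : Nat.card ↥Sp' ≠ 0 := Nat.card_pos.ne'
  have hfac : (Nat.card A).factorization p = e := by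
    rw [← hmul, he, Nat.factorization_mul (pow_ne_zero e hp.pos.ne') hpos]
    simp [hp.factorization_pow, Finsupp.single_eq_same,
      Nat.factorization_eq_zero_of_not_dvd hnd]
  rw [hfac, ← he]
end Circle
section Main
variable {A : Type*} [SkewBrace A] [Finite A]

lemma starB_eq (x y : A) : starB x y = lam x y - y := rfl

lemma starB_zero (x : A) : starB x 0 = 0 := by simp [starB, SB.lam_zero]

lemma lamAut_apply (a b : A) : SB.lamAut a b = lam a b := rfl

lemma Lseq_le_Sp {p : ℕ} {Sp : AddSubgroup A}
    (hSp : (Sp : Set A) = {a : A | ∃ k : ℕ, p ^ k • a = 0}) :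
    ∀ k, Lseq Sp k ≤ Sp := by
  intro k
  induction k with
  | zero => exact le_rfl
  | succ k ih =>
    show starSet (Set.univ : Set A) ↑(Lseq Sp k) ≤ Sp
    rw [starSet]
    apply (AddSubgroup.closure_le _).mpr
    rintro z ⟨x, -, y, hy, rfl⟩
    have hySp : y ∈ Sp := ih hy
    exact Sp.sub_mem (lam_mem_Sp hSp x hySp) hySp

lemma starSet_eq_bot_iff (X Y : Set A) :
    starSet X Y = ⊥ ↔ ∀ x ∈ X, ∀ y ∈ Y, starB x y = 0 := by
  constructor
  · intro h x hx y hy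
    have : starB x y ∈ starSet X Y := AddSubgroup.subset_closure ⟨x, hx, y, hy, rfl⟩
    rw [h] at this
    exact AddSubgroup.mem_bot.mp this
  · intro h
    rw [starSet, eq_bot_iff]
    apply (AddSubgroup.closure_le _).mpr
    rintro z ⟨x, hx, y, hy, rfl⟩
    simp [AddSubgroup.mem_bot, h x hx y hy]

lemma Lseq_bot_succ {Sp : AddSubgroup A} {n : ℕ} (h : Lseq Sp n = ⊥) :
    Lseq Sp (n + 1) = ⊥ := by
  show starSet (Set.univ : Set A) ↑(Lseq Sp n) = ⊥
  rw [h, starSet_eq_bot_iff]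
  rintro x - y hy
  have : y = 0 := AddSubgroup.mem_bot.mp hy
  rw [this, starB_zero]

lemma one_implies_two {p : ℕ} (hp : p.Prime) {Sp Sp' : AddSubgroup A}
    (hSp : (Sp : Set A) = {a : A | ∃ k : ℕ, p ^ k • a = 0})
    (hSp' : (Sp' : Set A) = {a : A | ¬ p ∣ addOrderOf a})
    (h1 : ∃ n : ℕ, 0 < n ∧ Lseq Sp n = ⊥) :
    ∀ x ∈ Sp', ∀ b ∈ Sp, starB x b = 0 := by
  obtain ⟨n, -, hbot⟩ := h1
  intro x hx
  have hord : ¬ p ∣ orderOf x := by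
    have hd : orderOf (⟨x, hx⟩ : circleSubgroup Sp' (fun x a ha => lam_mem_Sp' hSp' x ha)) ∣
        Nat.card ↥(circleSubgroup Sp' (fun x a ha => lam_mem_Sp' hSp' x ha)) :=
      orderOf_dvd_natCard _
    rw [card_circleSubgroup] at hd
    intro hpd
    have hd2 : orderOf x ∣ Nat.card ↥Sp' := by
      have hco := Subgroup.orderOf_coe
        (⟨x, hx⟩ : circleSubgroup Sp' (fun x a ha => lam_mem_Sp' hSp' x ha))
      rw [← hco] at hd
      exact hd
    exact card_Sp'_not_dvd hp hSp' (dvd_trans hpd hd2)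
  have key : ∀ k, (∀ c ∈ Lseq Sp (k + 1), starB x c = 0) →
      ∀ b ∈ Lseq Sp k, starB x b = 0 := by
    intro k ih b hb
    have hc : starB x b ∈ Lseq Sp (k + 1) :=
      AddSubgroup.subset_closure ⟨x, trivial, b, hb, rfl⟩
    have hcSp : starB x b ∈ Sp := Lseq_le_Sp hSp (k + 1) hc
    have hfix : lam x (starB x b) = starB x b := by
      have := ih _ hc
      rw [starB_eq, sub_eq_zero] at this
      exact this
    set c := starB x b with hcdef
    have hlb : lam x b = c + b := by rw [hcdef, starB_eq, sub_add_cancel]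
    have hpow : ∀ j : ℕ, (SB.lamAut x ^ j) b = j • c + b := by
      intro j
      induction j with
      | zero => simp
      | succ i ihh =>
        rw [pow_succ']
        have happ : (SB.lamAut x * SB.lamAut x ^ i) b = SB.lamAut x ((SB.lamAut x ^ i) b) :=
          rfl
        rw [happ, ihh]
        have : SB.lamAut x (i • c + b) = i • (lam x c) + lam x b := by
          rw [lamAut_apply, SB.lam_add]
          congr 1
          exact map_nsmul (SB.lamHom x) i c
        rw [this, hfix, hlb, succ_nsmul, add_assoc]
    have hm : (SB.lamAut x) ^ orderOf x = 1 := by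
      rw [← map_pow, pow_orderOf_eq_one, map_one]
    have hb' : b = orderOf x • c + b := by
      conv_lhs => rw [show b = (1 : Equiv.Perm A) b from rfl, ← hm]
      rw [hpow]
    have hmc : orderOf x • c = 0 := by
      have := hb'.symm
      rwa [add_eq_right] at this
    have hdvd : addOrderOf c ∣ orderOf x := addOrderOf_dvd_of_nsmul_eq_zero hmc
    obtain ⟨k', hk'⟩ := (mem_Sp_iff hSp).mp hcSp
    have hdvd2 : addOrderOf c ∣ p ^ k' := addOrderOf_dvd_of_nsmul_eq_zero hk'
    have hcop : Nat.Coprime (p ^ k') (orderOf x) :=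
      Nat.Coprime.pow_left k' ((Nat.Prime.coprime_iff_not_dvd hp).mpr hord)
    have h1' : addOrderOf c ∣ Nat.gcd (p ^ k') (orderOf x) := Nat.dvd_gcd hdvd2 hdvd
    rw [Nat.Coprime.gcd_eq_one hcop] at h1'
    exact AddMonoid.addOrderOf_eq_one_iff.mp (Nat.dvd_one.mp h1')
  have down : ∀ j, ∀ b ∈ Lseq Sp (n - j), starB x b = 0 := by
    intro j
    induction j with
    | zero =>
      intro b hb
      simp only [Nat.sub_zero] at hb
      rw [hbot] at hb
      rw [AddSubgroup.mem_bot.mp hb, starB_zero]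
    | succ j ihj =>
      rcases Nat.lt_or_ge j n with hj | hj
      · apply key (n - (j + 1))
        have : n - (j + 1) + 1 = n - j := by omega
        rw [this]
        exact ihj
      · have : n - (j + 1) = n - j := by omega
        rw [this]
        exact ihj
  intro b hb
  have := down n
  rw [Nat.sub_self] at this
  exact this b hb
end Main
section Main2
variable {A : Type*} [SkewBrace A] [Finite A]

lemma two_implies_three {p : ℕ} (hp : p.Prime) {Sp Sp' : AddSubgroup A}
    (hSp : (Sp : Set A) = {a : A | ∃ k : ℕ, p ^ k • a = 0})
    (hSp' : (Sp' : Set A) = {a : A | ¬ p ∣ addOrderOf a})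
    (h2 : ∀ x ∈ Sp', ∀ b ∈ Sp, lam x b = b) :
    ∃ H : Subgroup A, H.Normal ∧
      Nat.card H * p ^ ((Nat.card A).factorization p) = Nat.card A := by
  refine ⟨circleSubgroup Sp' (fun x a ha => lam_mem_Sp' hSp' x ha), ⟨?_⟩, ?_⟩
  · intro x hx g
    have hx' : x ∈ Sp' := hx
    obtain ⟨u, hu, v, hv, hg⟩ := exists_decomp hp hSp hSp' g
    obtain ⟨s, hs, t, ht, hginv⟩ := exists_decomp hp hSp hSp' g⁻¹
    have hq : lam g x ∈ Sp' := lam_mem_Sp' hSp' g hx'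
    have hw : lam g (lam x t) ∈ Sp' := lam_mem_Sp' hSp' g (lam_mem_Sp' hSp' x ht)
    have hst : lam g s + lam g t = -u + -v := by
      rw [← SB.lam_add, ← hginv, SB.lam_inv_self, hg, neg_add_rev]
      exact (Sp_Sp'_comm hp hSp hSp' (Sp.neg_mem hu) (Sp'.neg_mem hv)).symm
    have hgs : lam g s = -u ∧ lam g t = -v :=
      decomp_unique hp hSp hSp' (lam_mem_Sp hSp g hs) (lam_mem_Sp' hSp' g ht)
        (Sp.neg_mem hu) (Sp'.neg_mem hv) hst
    have hxg : x * g⁻¹ = x + (s + lam x t) := by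
      rw [SB.circ_eq x g⁻¹, hginv, SB.lam_add, h2 x hx' s hs]
    have hexp : g * x * g⁻¹ = g + (lam g x + (lam g s + lam g (lam x t))) := by
      rw [mul_assoc, SB.circ_eq g (x * g⁻¹), hxg, SB.lam_add, SB.lam_add]
    have hcomm : (v + lam g x) + -u = -u + (v + lam g x) :=
      (Sp_Sp'_comm hp hSp hSp' (Sp.neg_mem hu) (Sp'.add_mem hv hq)).symm
    have hfin : g * x * g⁻¹ = (v + lam g x) + lam g (lam x t) := by
      rw [hexp, hgs.1]
      nth_rewrite 1 [hg]
      calc (u + v) + (lam g x + (-u + lam g (lam x t)))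
          = (u + ((v + lam g x) + -u)) + lam g (lam x t) := by
            simp only [add_assoc]
        _ = (u + (-u + (v + lam g x))) + lam g (lam x t) := by rw [hcomm]
        _ = (v + lam g x) + lam g (lam x t) := by
            rw [add_neg_cancel_left]
    show g * x * g⁻¹ ∈ (Sp' : Set A)
    rw [hfin]
    exact Sp'.add_mem (Sp'.add_mem hv hq) hw
  · rw [card_circleSubgroup, ← card_Sp_eq hp hSp hSp', mul_comm]
    exact card_Sp_mul_card_Sp' hp hSp hSp'

lemma three_implies_two {p : ℕ} (hp : p.Prime) {Sp Sp' : AddSubgroup A}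
    (hSp : (Sp : Set A) = {a : A | ∃ k : ℕ, p ^ k • a = 0})
    (hSp' : (Sp' : Set A) = {a : A | ¬ p ∣ addOrderOf a})
    (h3 : ∃ H : Subgroup A, H.Normal ∧
      Nat.card H * p ^ ((Nat.card A).factorization p) = Nat.card A) :
    ∀ x ∈ Sp', ∀ b ∈ Sp, lam x b = b := by
  obtain ⟨H, hN, hcard⟩ := h3
  haveI := hN
  set e := (Nat.card A).factorization p with he
  have hpe : (0 : ℕ) < p ^ e := Nat.pow_pos hp.pos
  have hSp'card : Nat.card ↥Sp' * p ^ e = Nat.card A := by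
    rw [← card_Sp_eq hp hSp hSp', mul_comm]
    exact card_Sp_mul_card_Sp' hp hSp hSp'
  have hHcard : Nat.card ↥H = Nat.card ↥Sp' := by
    have h' : Nat.card ↥H * p ^ e = Nat.card ↥Sp' * p ^ e := by rw [hcard, hSp'card]
    exact Nat.eq_of_mul_eq_mul_right hpe h'
  have hquotcard : Nat.card (A ⧸ H) = p ^ e := by
    have h1 : Nat.card A = Nat.card (A ⧸ H) * Nat.card ↥H :=
      Subgroup.card_eq_card_quotient_mul_card_subgroup H
    have h2 : Nat.card (A ⧸ H) * Nat.card ↥H = p ^ e * Nat.card ↥H := by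
      rw [← h1, ← hcard, mul_comm]
    exact Nat.eq_of_mul_eq_mul_right Nat.card_pos h2
  -- the circle p'-subgroup is contained in H
  have hle : ∀ z : A, z ∈ Sp' → z ∈ H := by
    intro z hz
    have hzo : orderOf z ∣ Nat.card ↥Sp' := by
      have hd : orderOf (⟨z, hz⟩ : circleSubgroup Sp' (fun x a ha => lam_mem_Sp' hSp' x ha)) ∣
          Nat.card ↥(circleSubgroup Sp' (fun x a ha => lam_mem_Sp' hSp' x ha)) :=
        orderOf_dvd_natCard _
      rw [card_circleSubgroup] at hd
      have hco := Subgroup.orderOf_coe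
        (⟨z, hz⟩ : circleSubgroup Sp' (fun x a ha => lam_mem_Sp' hSp' x ha))
      rw [← hco] at hd
      exact hd
    have hq1 : orderOf (z : A ⧸ H) ∣ Nat.card ↥Sp' :=
      dvd_trans (orderOf_map_dvd (QuotientGroup.mk' H) z) hzo
    have hq2 : orderOf (z : A ⧸ H) ∣ p ^ e := by
      rw [← hquotcard]
      exact orderOf_dvd_natCard _
    have hnd := card_Sp'_not_dvd hp hSp'
    have hcop : Nat.Coprime (p ^ e) (Nat.card ↥Sp') :=
      Nat.Coprime.pow_left e ((Nat.Prime.coprime_iff_not_dvd hp).mpr hnd)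
    have h1' : orderOf (z : A ⧸ H) ∣ Nat.gcd (p ^ e) (Nat.card ↥Sp') :=
      Nat.dvd_gcd hq2 hq1
    rw [Nat.Coprime.gcd_eq_one hcop] at h1'
    have : (z : A ⧸ H) = 1 := orderOf_eq_one_iff.mp (Nat.dvd_one.mp h1')
    exact (QuotientGroup.eq_one_iff z).mp this
  -- H and Sp' coincide as sets
  have hsets : (Sp' : Set A) = (H : Set A) := by
    refine Set.eq_of_subset_of_ncard_le hle ?_ (Set.toFinite _)
    have hc1 : (H : Set A).ncard = Nat.card ↥H := by
      rw [← Nat.card_coe_set_eq]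
      exact Nat.card_congr (Equiv.refl _)
    have hc2 : ((Sp' : Set A)).ncard = Nat.card ↥Sp' := by
      rw [← Nat.card_coe_set_eq]
      exact Nat.card_congr (Equiv.refl _)
    rw [hc1, hc2, hHcard]
  -- main computation: λ_x fixes inverses of elements of Sp
  have main : ∀ x ∈ Sp', ∀ b, b ∈ Sp → lam x b⁻¹ = b⁻¹ := by
    intro x hx b hb
    have hbinv : b⁻¹ ∈ Sp := by
      have := (circleSubgroup Sp (fun y a ha => lam_mem_Sp hSp y ha)).inv_mem
        (x := b) hb
      exact this
    have hxH : x ∈ H := by rw [← SetLike.mem_coe, ← hsets]; exact hx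
    have hconjH : b * x * b⁻¹ ∈ H := hN.conj_mem x hxH b
    have hconj : b * x * b⁻¹ ∈ Sp' := by rw [← SetLike.mem_coe, hsets]; exact hconjH
    set w := lam x b⁻¹ with hw
    have hwSp : w ∈ Sp := lam_mem_Sp hSp x hbinv
    have hbw : lam b w ∈ Sp := lam_mem_Sp hSp b hwSp
    have hbx : lam b x ∈ Sp' := lam_mem_Sp' hSp' b hx
    have hexp : b * x * b⁻¹ = (b + lam b w) + lam b x := by
      rw [mul_assoc, SB.circ_eq b (x * b⁻¹), SB.circ_eq x b⁻¹, SB.lam_add, ← hw,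
        ← Sp_Sp'_comm hp hSp hSp' hbw hbx, ← add_assoc]
    have huniq : b + lam b w = 0 ∧ lam b x = b * x * b⁻¹ := by
      apply decomp_unique hp hSp hSp' (Sp.add_mem hb hbw) hbx Sp.zero_mem hconj
      rw [zero_add, ← hexp]
    have hlbw : lam b w = -b := by
      have := huniq.1
      exact eq_neg_of_add_eq_zero_right this
    have hlbb : lam b b⁻¹ = -b := SB.lam_inv_self b
    have : w = b⁻¹ := SB.lam_injective b (hlbw.trans hlbb.symm)
    exact this
  intro x hx b hb
  have hbinv : b⁻¹ ∈ Sp := by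
    exact (circleSubgroup Sp (fun y a ha => lam_mem_Sp hSp y ha)).inv_mem (x := b) hb
  have := main x hx b⁻¹ hbinv
  rwa [inv_inv] at this
end Main2
section Main3
variable {A : Type*} [SkewBrace A]

/-- The multiplicative version of an additive subgroup. -/
def mulSub (Sp : AddSubgroup A) : Subgroup (Multiplicative A) where
  carrier := {x | Multiplicative.toAdd x ∈ Sp}
  one_mem' := Sp.zero_mem
  mul_mem' := fun ha hb => Sp.add_mem ha hb
  inv_mem' := fun ha => Sp.neg_mem ha

/-- The lambda action of `A` restricted to `Sp`, as automorphisms. -/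
def rho {p : ℕ} {Sp : AddSubgroup A}
    (hSp : (Sp : Set A) = {a : A | ∃ k : ℕ, p ^ k • a = 0}) :
    A →* MulAut ↥(mulSub Sp) where
  toFun a :=
  { toFun := fun b =>
      ⟨Multiplicative.ofAdd (lam a (Multiplicative.toAdd (b : Multiplicative A))),
        lam_mem_Sp hSp a b.2⟩
    invFun := fun b =>
      ⟨Multiplicative.ofAdd (lam a⁻¹ (Multiplicative.toAdd (b : Multiplicative A))),
        lam_mem_Sp hSp a⁻¹ b.2⟩
    left_inv := by
      intro b
      ext
      show Multiplicative.ofAdd (lam a⁻¹ (lam a _)) = _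
      rw [SB.lam_inv_lam]
      rfl
    right_inv := by
      intro b
      ext
      show Multiplicative.ofAdd (lam a (lam a⁻¹ _)) = _
      rw [SB.lam_lam_inv]
      rfl
    map_mul' := by
      intro b c
      ext
      show Multiplicative.ofAdd (lam a (Multiplicative.toAdd (b : Multiplicative A) +
        Multiplicative.toAdd (c : Multiplicative A))) = _
      rw [SB.lam_add]
      rfl }
  map_one' := by
    ext b
    show Multiplicative.ofAdd (lam (1 : A) _) = _
    rw [SB.lam_one]
    rfl
  map_mul' := fun a b => by
    ext c
    show Multiplicative.ofAdd (lam (a * b) _) = _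
    rw [← SB.lam_lam]
    rfl

lemma two_implies_one [Finite A] {p : ℕ} (hp : p.Prime) {Sp Sp' : AddSubgroup A}
    (hSp : (Sp : Set A) = {a : A | ∃ k : ℕ, p ^ k • a = 0})
    (hSp' : (Sp' : Set A) = {a : A | ¬ p ∣ addOrderOf a})
    (h2 : ∀ x ∈ Sp', ∀ b ∈ Sp, lam x b = b) :
    ∃ n : ℕ, 0 < n ∧ Lseq Sp n = ⊥ := by
  haveI : Fact p.Prime := ⟨hp⟩
  set ρ : A →* MulAut ↥(mulSub Sp) := rho hSp with hρ
  set Hg : Subgroup (MulAut ↥(mulSub Sp)) := ρ.range with hHg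
  -- cardinality of the range is a power of p
  have hker : ∀ x ∈ Sp', x ∈ ρ.ker := by
    intro x hx
    rw [MonoidHom.mem_ker]
    ext b
    show Multiplicative.ofAdd (lam x (Multiplicative.toAdd (b : Multiplicative A))) = _
    rw [h2 x hx (Multiplicative.toAdd (b : Multiplicative A)) b.2]
    rfl
  have hrangeker : Nat.card ↥Hg * Nat.card ↥ρ.ker = Nat.card A := by
    have h1 := Subgroup.card_eq_card_quotient_mul_card_subgroup ρ.ker
    have h2' : Nat.card (A ⧸ ρ.ker) = Nat.card ↥Hg :=
      Nat.card_congr (QuotientGroup.quotientKerEquivRange ρ).toEquiv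
    rw [← h2', ← h1]
  have hSp'dvd : Nat.card ↥Sp' ∣ Nat.card ↥ρ.ker := by
    have hle : circleSubgroup Sp' (fun x a ha => lam_mem_Sp' hSp' x ha) ≤ ρ.ker := by
      intro z hz
      exact hker z hz
    have := Subgroup.card_dvd_of_le hle
    rwa [card_circleSubgroup] at this
  obtain ⟨e0, he0⟩ := card_Sp_pow hp hSp
  have hHgdvd : Nat.card ↥Hg ∣ p ^ e0 := by
    obtain ⟨d, hd⟩ := hSp'dvd
    have hcm : Nat.card ↥Sp * Nat.card ↥Sp' = Nat.card A := card_Sp_mul_card_Sp' hp hSp hSp'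
    have heq : (Nat.card ↥Hg * d) * Nat.card ↥Sp' = Nat.card ↥Sp * Nat.card ↥Sp' := by
      rw [hcm, ← hrangeker, hd]
      ring
    have := Nat.eq_of_mul_eq_mul_right (Nat.card_pos (α := ↥Sp')) heq
    rw [← he0, ← this]
    exact Dvd.intro d rfl
  obtain ⟨eH, -, hcardHg⟩ := (Nat.dvd_prime_pow hp).mp hHgdvd
  have hPH : IsPGroup p ↥Hg := IsPGroup.iff_card.mpr ⟨eH, hcardHg⟩
  have hPL : IsPGroup p ↥(mulSub Sp) := by
    intro g
    obtain ⟨k, hk⟩ := (mem_Sp_iff hSp).mp g.2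
    refine ⟨k, ?_⟩
    ext
    show Multiplicative.toAdd ((g : Multiplicative A) ^ p ^ k) = Multiplicative.toAdd 1
    rw [toAdd_pow]
    exact hk
  -- the semidirect product is a finite p-group
  let N := (↥(mulSub Sp)) ⋊[Hg.subtype] ↥Hg
  let eN : N ≃ ↥(mulSub Sp) × ↥Hg :=
    ⟨fun w => (w.left, w.right), fun w => ⟨w.1, w.2⟩, fun w => rfl, fun w => rfl⟩
  haveI hNfin : Finite N := Finite.of_equiv _ eN.symm
  have eLS : ↥(mulSub Sp) ≃ ↥Sp :=
    ⟨fun x => ⟨Multiplicative.toAdd (x : Multiplicative A), x.2⟩,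
     fun a => ⟨Multiplicative.ofAdd (a : A), a.2⟩, fun _ => rfl, fun _ => rfl⟩
  have hPN : IsPGroup p N := by
    apply IsPGroup.iff_card.mpr
    refine ⟨e0 + eH, ?_⟩
    rw [Nat.card_congr eN, Nat.card_prod, Nat.card_congr eLS, he0, hcardHg, pow_add]
  haveI hnilp : Group.IsNilpotent N := hPN.isNilpotent
  obtain ⟨m, hm⟩ := Group.IsNilpotent.nilpotent (G := N)
  -- the approximating additive subgroups
  let K : ℕ → AddSubgroup A := fun i =>
    { carrier := {b | ∃ hb : b ∈ Sp,
        (SemidirectProduct.inl (⟨Multiplicative.ofAdd b, hb⟩ : ↥(mulSub Sp)) : N) ∈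
          Subgroup.upperCentralSeries N i}
      zero_mem' := ⟨Sp.zero_mem, by
        have h0 : (⟨Multiplicative.ofAdd (0 : A), Sp.zero_mem⟩ : ↥(mulSub Sp)) = 1 := rfl
        rw [h0, map_one]
        exact Subgroup.one_mem _⟩
      add_mem' := by
        rintro a b ⟨ha, hZa⟩ ⟨hb, hZb⟩
        refine ⟨Sp.add_mem ha hb, ?_⟩
        have hmul : (⟨Multiplicative.ofAdd (a + b), Sp.add_mem ha hb⟩ : ↥(mulSub Sp)) =
            ⟨Multiplicative.ofAdd a, ha⟩ * ⟨Multiplicative.ofAdd b, hb⟩ := rfl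
        rw [hmul, map_mul]
        exact Subgroup.mul_mem _ hZa hZb
      neg_mem' := by
        rintro a ⟨ha, hZa⟩
        refine ⟨Sp.neg_mem ha, ?_⟩
        have hinv : (⟨Multiplicative.ofAdd (-a), Sp.neg_mem ha⟩ : ↥(mulSub Sp)) =
            (⟨Multiplicative.ofAdd a, ha⟩ : ↥(mulSub Sp))⁻¹ := rfl
        rw [hinv, map_inv]
        exact Subgroup.inv_mem _ hZa }
  have hKmem : ∀ (i : ℕ) (b : A), b ∈ K i ↔ ∃ hb : b ∈ Sp,
      (SemidirectProduct.inl (⟨Multiplicative.ofAdd b, hb⟩ : ↥(mulSub Sp)) : N) ∈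
        Subgroup.upperCentralSeries N i := fun i b => Iff.rfl
  have main : ∀ j, Lseq Sp j ≤ K (m - j) := by
    intro j
    induction j with
    | zero =>
      intro b hb
      rw [hKmem]
      refine ⟨hb, ?_⟩
      rw [Nat.sub_zero, hm]
      exact Subgroup.mem_top _
    | succ j ih =>
      show starSet (Set.univ : Set A) ↑(Lseq Sp j) ≤ K (m - (j + 1))
      rw [starSet]
      apply (AddSubgroup.closure_le _).mpr
      rintro z ⟨x, -, y, hy, rfl⟩
      obtain ⟨hySp, hZ⟩ := (hKmem _ _).mp (ih hy)
      have hzSp : starB x y ∈ Sp := Sp.sub_mem (lam_mem_Sp hSp x hySp) hySp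
      show starB x y ∈ K (m - (j + 1))
      rw [hKmem]
      refine ⟨hzSp, ?_⟩
      rcases Nat.eq_zero_or_pos (m - j) with hmj | hmj
      · -- then y = 0 and z = 0
        rw [hmj, Subgroup.upperCentralSeries_zero, Subgroup.mem_bot] at hZ
        have hy0 : y = 0 := by
          have h3 := SemidirectProduct.inl_injective (φ := Hg.subtype) hZ
          have h4 : Multiplicative.ofAdd y = 1 := congrArg Subtype.val h3
          simpa using h4
        have hz0 : starB x y = 0 := by rw [hy0, starB_zero]
        have hmm : m - (j+1) = 0 := by omega
        rw [hmm, Subgroup.upperCentralSeries_zero, Subgroup.mem_bot]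
        have h0 : (⟨Multiplicative.ofAdd (starB x y), hzSp⟩ : ↥(mulSub Sp)) = 1 := by
          ext
          show Multiplicative.ofAdd (starB x y) = 1
          rw [hz0]
          rfl
        rw [h0, map_one]
      · obtain ⟨k, hk⟩ : ∃ k, m - j = k + 1 := ⟨m - j - 1, by omega⟩
        have hk2 : m - (j + 1) = k := by omega
        rw [hk2]
        rw [hk] at hZ
        set X : N := SemidirectProduct.inl (⟨Multiplicative.ofAdd y, hySp⟩ : ↥(mulSub Sp))
          with hX
        set Y : N := SemidirectProduct.inr (⟨ρ x, MonoidHom.mem_range.mpr ⟨x, rfl⟩⟩ : ↥Hg)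
          with hY
        have hcomm : X * Y * X⁻¹ * Y⁻¹ ∈ Subgroup.upperCentralSeries N k :=
          (Subgroup.mem_upperCentralSeries_succ_iff).mp hZ Y
        have hcomm2 : Y * X * Y⁻¹ * X⁻¹ ∈ Subgroup.upperCentralSeries N k := by
          have hinv : Y * X * Y⁻¹ * X⁻¹ = (X * Y * X⁻¹ * Y⁻¹)⁻¹ := by
            simp only [mul_inv_rev, mul_assoc]
            exact congrArg₂ (· * ·) (inv_inv Y).symm (congrArg₂ (· * ·) (inv_inv X).symm rfl)
          rw [hinv]
          exact Subgroup.inv_mem _ hcomm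
        have hkey : (SemidirectProduct.inl
            (⟨Multiplicative.ofAdd (starB x y), hzSp⟩ : ↥(mulSub Sp)) : N) =
            Y * X * Y⁻¹ * X⁻¹ := by
          have h1 : Y * X * Y⁻¹ = SemidirectProduct.inl
              (Hg.subtype ⟨ρ x, MonoidHom.mem_range.mpr ⟨x, rfl⟩⟩
                (⟨Multiplicative.ofAdd y, hySp⟩ : ↥(mulSub Sp))) := by
            rw [hY, hX, ← map_inv]
            exact (SemidirectProduct.inl_aut _ _).symm
          have h2'' : Hg.subtype ⟨ρ x, MonoidHom.mem_range.mpr ⟨x, rfl⟩⟩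
              (⟨Multiplicative.ofAdd y, hySp⟩ : ↥(mulSub Sp)) =
              ⟨Multiplicative.ofAdd (lam x y), lam_mem_Sp hSp x hySp⟩ := rfl
          rw [h1, h2'', ← map_inv, ← map_mul]
          congr 1
          ext
          show Multiplicative.ofAdd (starB x y) =
            Multiplicative.ofAdd (lam x y) * (Multiplicative.ofAdd y)⁻¹
          rw [starB_eq, sub_eq_add_neg]
          rfl
        rw [hkey]
        exact hcomm2
  have hLm : Lseq Sp m = ⊥ := by
    rw [eq_bot_iff]
    intro b hb
    obtain ⟨hbSp, hZ⟩ := (hKmem _ _).mp (main m hb)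
    rw [Nat.sub_self, Subgroup.upperCentralSeries_zero, Subgroup.mem_bot] at hZ
    have h3 := SemidirectProduct.inl_injective (φ := Hg.subtype) hZ
    have h4 : Multiplicative.ofAdd b = 1 := congrArg Subtype.val h3
    have h5 : b = 0 := by simpa using h4
    rw [h5]
    exact AddSubgroup.zero_mem _
  exact ⟨m + 1, Nat.succ_pos m, Lseq_bot_succ hLm⟩
end Main3

/-- Let `A` be a finite skew left brace of nilpotent type, `p` a prime dividing `|A|`,
`A_p` the Sylow `p`-subgroup of `(A,+)` and `A_{p'}` the Hall `p'`-subgroup of `(A,+)`.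
The following are equivalent: (1) `L_n(A, A_p) = 0` for some `n ≥ 1`;
(2) `A_{p'} * A_p = 0`; (3) `(A,∘)` is `p`-nilpotent, i.e. has a normal Hall
`p'`-subgroup. -/
theorem left_p_nilpotent_tfae {A : Type*} [SkewBrace A] [Finite A]
    (hnil : Group.IsNilpotent (Multiplicative A)) (p : ℕ) (hp : p.Prime)
    (hdvd : p ∣ Nat.card A) (Sp Sp' : AddSubgroup A)
    (hSp : (Sp : Set A) = {a : A | ∃ k : ℕ, p ^ k • a = 0})
    (hSp' : (Sp' : Set A) = {a : A | ¬ p ∣ addOrderOf a}) :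
    ((∃ n : ℕ, 0 < n ∧ Lseq Sp n = ⊥) ↔ starSet (↑Sp' : Set A) ↑Sp = ⊥) ∧
    (starSet (↑Sp' : Set A) ↑Sp = ⊥ ↔
      ∃ H : Subgroup A, H.Normal ∧
        Nat.card H * p ^ (Nat.card A).factorization p = Nat.card A) := by
  have hbridge : starSet (↑Sp' : Set A) ↑Sp = ⊥ ↔ ∀ x ∈ Sp', ∀ b ∈ Sp, lam x b = b := by
    rw [starSet_eq_bot_iff]
    constructor
    · intro h x hx b hb
      have := h x hx b hb
      rwa [starB_eq, sub_eq_zero] at this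
    · intro h x hx b hb
      rw [starB_eq, sub_eq_zero]
      exact h x hx b hb
  constructor
  · constructor
    · intro h1
      rw [hbridge]
      intro x hx b hb
      have := one_implies_two hp hSp hSp' h1 x hx b hb
      rwa [starB_eq, sub_eq_zero] at this
    · intro h2
      exact two_implies_one hp hSp hSp' (hbridge.mp h2)
  · constructor
    · intro h2
      exact two_implies_three hp hSp hSp' (hbridge.mp h2)
    · intro h3
      rw [hbridge]
      exact three_implies_two hp hSp hSp' h3
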